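/- arXiv:1009.5689 — 6 statements merged into one kernel-verified Lean document; each statement's English description precedes it below -/
import Mathlib

section
/- Suppose Q̂(β₀) > 0, κ_c̄ > 0, and λ ≥ c·n·‖S̃‖_∞ with c > 1 (so that δ̂ = β̂ − β₀ lies in Δ_c̄ when δ̂ ≠ 0). Then any square-root lasso solution β̂ satisfies √(Q̂(β̂)) ≤ √(Q̂(β₀)) + (λ/n) · (√s · ‖β̂ − β₀‖_{2,n} / κ_c̄). (Inequality (Eq:boundQ) from the proof of Theorem 1.) -/
open Finset

/-- Inequality (Eq:boundQ) from the proof of Theorem 1: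
`√Q̂(β̂) ≤ √Q̂(β₀) + (λ/n)·√s·‖β̂ - β₀‖_{2,n}/κ_c̄`. -/
theorem sqrt_lasso_Qhat_bound
    (n p : ℕ) (hn : 0 < n) (hp : 0 < p)
    (x : Fin n → Fin p → ℝ) (ε : Fin n → ℝ) (β₀ : Fin p → ℝ) (σ : ℝ) (hσ : 0 < σ)
    (y : Fin n → ℝ) (hy : ∀ i, y i = (∑ j, x i j * β₀ j) + σ * ε i)
    (T : Finset (Fin p)) (hT : ∀ j, j ∈ T ↔ β₀ j ≠ 0)
    (s : ℕ) (hs : s = T.card) (hs1 : 1 ≤ s)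
    (Q : (Fin p → ℝ) → ℝ)
    (hQ : ∀ β, Q β = (n : ℝ)⁻¹ * ∑ i, (y i - ∑ j, x i j * β j) ^ 2)
    (hQ0 : 0 < Q β₀)
    (pnorm : (Fin p → ℝ) → ℝ)
    (hpnorm : ∀ δ : Fin p → ℝ,
      pnorm δ = Real.sqrt ((n : ℝ)⁻¹ * ∑ i, (∑ j, x i j * δ j) ^ 2))
    (S : Fin p → ℝ)
    (hS : ∀ j, S j = ((n : ℝ)⁻¹ * ∑ i, x i j * ε i) /
      Real.sqrt ((n : ℝ)⁻¹ * ∑ i, (ε i) ^ 2))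
    (c cbar κ lam : ℝ) (hc : 1 < c) (hcbar : cbar = (c + 1) / (c - 1))
    (hκpos : 0 < κ)
    (hκ : ∀ δ : Fin p → ℝ, δ ≠ 0 → (∑ j ∈ Tᶜ, |δ j|) ≤ cbar * ∑ j ∈ T, |δ j| →
      κ * (∑ j ∈ T, |δ j|) ≤ Real.sqrt s * pnorm δ)
    (hlam : c * ((n : ℝ) * Finset.univ.sup' ⟨⟨0, hp⟩, Finset.mem_univ _⟩
      (fun j => |S j|)) ≤ lam)
    (βh : Fin p → ℝ)
    (hopt : ∀ β : Fin p → ℝ,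
      Real.sqrt (Q βh) + (lam / n) * ∑ j, |βh j| ≤
      Real.sqrt (Q β) + (lam / n) * ∑ j, |β j|) :
    Real.sqrt (Q βh) ≤ Real.sqrt (Q β₀) +
      (lam / n) * (Real.sqrt s * pnorm (fun j => βh j - β₀ j) / κ) := by

  -- setup
  set δ : Fin p → ℝ := fun j => βh j - β₀ j with hδdef
  have hnpos : (0:ℝ) < n := by exact_mod_cast hn
  have hninv : (0:ℝ) < (n : ℝ)⁻¹ := inv_pos.2 hnpos
  set E2 : ℝ := (n : ℝ)⁻¹ * ∑ i, (ε i) ^ 2 with hE2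
  have hres0 : ∀ i, y i - ∑ j, x i j * β₀ j = σ * ε i := by
    intro i; rw [hy i]; ring
  have hQβ₀ : Q β₀ = σ ^ 2 * E2 := by
    rw [hQ, hE2]
    simp only [hres0, mul_pow]
    rw [← Finset.mul_sum]
    ring
  have hE2pos : 0 < E2 := by
    have hσ2 : 0 < σ ^ 2 := by positivity
    nlinarith [hQ0, hQβ₀]
  have hsqrtQ0 : Real.sqrt (Q β₀) = σ * Real.sqrt E2 := by
    rw [hQβ₀, Real.sqrt_mul (sq_nonneg σ), Real.sqrt_sq hσ.le]
  have hsqrtE2pos : 0 < Real.sqrt E2 := Real.sqrt_pos.2 hE2pos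
  have hsqrtQ0pos : 0 < Real.sqrt (Q β₀) := Real.sqrt_pos.2 hQ0
  -- residual at βh
  set w : Fin n → ℝ := fun i => ∑ j, x i j * δ j with hw
  have hresh : ∀ i, y i - ∑ j, x i j * βh j = σ * ε i - w i := by
    intro i
    rw [hy i, hw]
    simp only [hδdef, mul_sub, Finset.sum_sub_distrib]
    ring
  set W : ℝ := (n : ℝ)⁻¹ * ∑ i, ε i * w i with hW
  have hQβh : Q βh = (n : ℝ)⁻¹ * ∑ i, (σ * ε i - w i) ^ 2 := by
    rw [hQ]; simp only [hresh]
  have hQβhnn : 0 ≤ Q βh := by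
    rw [hQβh]; positivity
  -- Cauchy-Schwarz lower bound
  have hcs : Q β₀ - σ * W ≤ Real.sqrt (Q β₀) * Real.sqrt (Q βh) := by
    have h1 : ∑ i, (σ * ε i) * (σ * ε i - w i) ≤
        Real.sqrt (∑ i, (σ * ε i) ^ 2) * Real.sqrt (∑ i, (σ * ε i - w i) ^ 2) :=
      Real.sum_mul_le_sqrt_mul_sqrt _ _ _
    have hq0 : Q β₀ = (n : ℝ)⁻¹ * ∑ i, (σ * ε i) ^ 2 := by
      rw [hQ]; simp only [hres0]
    have h2 : Real.sqrt (Q β₀) * Real.sqrt (Q βh) =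
        (n : ℝ)⁻¹ * (Real.sqrt (∑ i, (σ * ε i) ^ 2) * Real.sqrt (∑ i, (σ * ε i - w i) ^ 2)) := by
      rw [hq0, hQβh, Real.sqrt_mul hninv.le, Real.sqrt_mul hninv.le]
      have hsn : Real.sqrt ((n:ℝ)⁻¹) * Real.sqrt ((n:ℝ)⁻¹) = (n:ℝ)⁻¹ :=
        Real.mul_self_sqrt hninv.le
      calc Real.sqrt ((n:ℝ)⁻¹) * Real.sqrt (∑ i, (σ * ε i) ^ 2) *
            (Real.sqrt ((n:ℝ)⁻¹) * Real.sqrt (∑ i, (σ * ε i - w i) ^ 2))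
          = (Real.sqrt ((n:ℝ)⁻¹) * Real.sqrt ((n:ℝ)⁻¹)) *
            (Real.sqrt (∑ i, (σ * ε i) ^ 2) * Real.sqrt (∑ i, (σ * ε i - w i) ^ 2)) := by ring
        _ = _ := by rw [hsn]
    have e1 : ∑ i, (σ * ε i) * (σ * ε i - w i)
        = σ ^ 2 * (∑ i, (ε i) ^ 2) - σ * ∑ i, ε i * w i := by
      rw [Finset.mul_sum, Finset.mul_sum, ← Finset.sum_sub_distrib]
      exact Finset.sum_congr rfl fun i _ => by ring
    have h3 : Q β₀ - σ * W = (n:ℝ)⁻¹ * ∑ i, (σ * ε i) * (σ * ε i - w i) := by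
      rw [e1, hQβ₀, hW, hE2]; ring
    rw [h3, h2]
    exact mul_le_mul_of_nonneg_left h1 hninv.le
  -- hence sqrt Q βh ≥ sqrt Q β₀ - W / sqrt E2
  have hlower : Real.sqrt (Q β₀) - W / Real.sqrt E2 ≤ Real.sqrt (Q βh) := by
    have h4 : (Q β₀ - σ * W) / Real.sqrt (Q β₀) ≤ Real.sqrt (Q βh) := by
      rw [div_le_iff₀ hsqrtQ0pos]
      linarith [hcs, mul_comm (Real.sqrt (Q β₀)) (Real.sqrt (Q βh))]
    have h5 : (Q β₀ - σ * W) / Real.sqrt (Q β₀)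
        = Real.sqrt (Q β₀) - W / Real.sqrt E2 := by
      have hne : Real.sqrt E2 ≠ 0 := ne_of_gt hsqrtE2pos
      have hσne : σ ≠ 0 := ne_of_gt hσ
      rw [hsqrtQ0, hQβ₀]
      field_simp
      linear_combination (-σ) * Real.mul_self_sqrt hE2pos.le + (-σ) * hE2
    linarith [h4, h5.le, h5.symm.le]
  -- Σ S j δ j = W / sqrt E2
  have hSδ : ∑ j, S j * δ j = W / Real.sqrt E2 := by
    have e0 : ∑ j, S j * δ j
        = (∑ j, ((n:ℝ)⁻¹ * ∑ i, x i j * ε i) * δ j) / Real.sqrt E2 := by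
      rw [Finset.sum_div]
      exact Finset.sum_congr rfl fun j _ => by rw [hS]; ring
    rw [e0]
    congr 1
    calc ∑ j, ((n:ℝ)⁻¹ * ∑ i, x i j * ε i) * δ j
        = (n:ℝ)⁻¹ * ∑ j, ∑ i, x i j * ε i * δ j := by
          rw [Finset.mul_sum]
          exact Finset.sum_congr rfl fun j _ => by rw [mul_assoc, Finset.sum_mul]
      _ = (n:ℝ)⁻¹ * ∑ i, ∑ j, x i j * ε i * δ j := by rw [Finset.sum_comm]
      _ = W := by
          rw [hW]
          congr 1
          refine Finset.sum_congr rfl fun i _ => ?_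
          rw [hw, Finset.mul_sum]
          exact Finset.sum_congr rfl fun j _ => by ring
  -- sup-norm machinery
  have hne : (Finset.univ : Finset (Fin p)).Nonempty := ⟨⟨0, hp⟩, Finset.mem_univ _⟩
  set M : ℝ := Finset.univ.sup' hne (fun j => |S j|) with hMdef
  have hlamM : c * ((n : ℝ) * M) ≤ lam := hlam
  have hMnn : 0 ≤ M := by
    rw [hMdef]
    exact le_trans (abs_nonneg (S ⟨0, hp⟩))
      (Finset.le_sup' (fun j => |S j|) (Finset.mem_univ (⟨0, hp⟩ : Fin p)))
  have hc0 : (0:ℝ) < c := lt_trans one_pos hc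
  have hlamnn : 0 ≤ lam :=
    le_trans (mul_nonneg hc0.le (mul_nonneg hnpos.le hMnn)) hlamM
  have hln : 0 ≤ lam / (n : ℝ) := div_nonneg hlamnn hnpos.le
  set L1T : ℝ := ∑ j ∈ T, |δ j| with hL1T
  set L1Tc : ℝ := ∑ j ∈ Tᶜ, |δ j| with hL1Tc
  have hL1Tnn : 0 ≤ L1T := Finset.sum_nonneg fun j _ => abs_nonneg _
  have hL1Tcnn : 0 ≤ L1Tc := Finset.sum_nonneg fun j _ => abs_nonneg _
  have hsplit : ∑ j, |δ j| = L1T + L1Tc := (Finset.sum_add_sum_compl T _).symm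
  have hSbound : ∑ j, S j * δ j ≤ M * (L1T + L1Tc) := by
    calc ∑ j, S j * δ j ≤ ∑ j, |S j| * |δ j| := by
          refine Finset.sum_le_sum fun j _ => ?_
          calc S j * δ j ≤ |S j * δ j| := le_abs_self _
            _ = |S j| * |δ j| := abs_mul _ _
      _ ≤ ∑ j, M * |δ j| := by
          refine Finset.sum_le_sum fun j _ => ?_
          refine mul_le_mul_of_nonneg_right ?_ (abs_nonneg _)
          rw [hMdef]
          exact Finset.le_sup' (fun j => |S j|) (Finset.mem_univ j)
      _ = M * ∑ j, |δ j| := (Finset.mul_sum _ _ _).symm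
      _ = M * (L1T + L1Tc) := by rw [hsplit]
  -- β₀ vanishes off T
  have hβ₀T : ∀ j ∈ Tᶜ, β₀ j = 0 := by
    intro j hj
    rw [Finset.mem_compl] at hj
    by_contra h
    exact hj ((hT j).2 h)
  have hl1diff : (∑ j, |β₀ j|) - ∑ j, |βh j| ≤ L1T - L1Tc := by
    rw [← Finset.sum_add_sum_compl T (fun j => |β₀ j|),
      ← Finset.sum_add_sum_compl T (fun j => |βh j|)]
    have h1 : ∑ j ∈ T, |β₀ j| - ∑ j ∈ T, |βh j| ≤ L1T := by
      rw [hL1T, ← Finset.sum_sub_distrib]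
      refine Finset.sum_le_sum fun j _ => ?_
      calc |β₀ j| - |βh j| ≤ |β₀ j - βh j| := abs_sub_abs_le_abs_sub _ _
        _ = |δ j| := by rw [hδdef]; simp [abs_sub_comm]
    have ha : ∑ j ∈ Tᶜ, |β₀ j| = 0 :=
      Finset.sum_eq_zero fun j hj => by rw [hβ₀T j hj]; simp
    have hb : ∑ j ∈ Tᶜ, |βh j| = L1Tc := by
      rw [hL1Tc]
      refine Finset.sum_congr rfl fun j hj => ?_
      rw [hδdef]
      simp [hβ₀T j hj]
    rw [ha, hb]
    linarith
  -- key optimality inequality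
  have hkey : Real.sqrt (Q βh) ≤ Real.sqrt (Q β₀) + (lam / n) * (L1T - L1Tc) := by
    have h0 := hopt β₀
    have h1 := mul_le_mul_of_nonneg_left hl1diff hln
    linarith [h0, h1]
  -- dispose of the lam = 0 case
  by_cases hlam0 : lam = 0
  · rw [hlam0] at hkey ⊢
    simp only [zero_div, zero_mul, add_zero] at hkey ⊢
    exact hkey
  have hlampos : 0 < lam := lt_of_le_of_ne hlamnn (Ne.symm hlam0)
  -- dispose of the δ = 0 case
  by_cases hδ0 : δ = 0
  · have hT0 : L1T = 0 := by rw [hL1T]; simp [hδ0]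
    have hTc0 : L1Tc = 0 := by rw [hL1Tc]; simp [hδ0]
    have hpn : 0 ≤ pnorm δ := by rw [hpnorm]; exact Real.sqrt_nonneg _
    have hrhs : 0 ≤ (lam / n) * (Real.sqrt s * pnorm δ / κ) := by
      apply mul_nonneg hln
      apply div_nonneg _ hκpos.le
      exact mul_nonneg (Real.sqrt_nonneg _) hpn
    rw [hT0, hTc0] at hkey
    linarith
  -- cone condition
  have hcone0 : lam * L1Tc ≤ lam * L1T + ((n : ℝ) * M) * (L1T + L1Tc) := by
    have h6 : Real.sqrt (Q β₀) - M * (L1T + L1Tc) ≤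
        Real.sqrt (Q β₀) + (lam / n) * (L1T - L1Tc) := by
      have h7 : Real.sqrt (Q β₀) - M * (L1T + L1Tc) ≤ Real.sqrt (Q βh) := by
        have := hSδ
        linarith [hlower, hSbound, hSδ.le, hSδ.symm.le]
      linarith [hkey]
    have h7 : -(M * (L1T + L1Tc)) ≤ (lam / n) * (L1T - L1Tc) := by linarith
    have h8 := mul_le_mul_of_nonneg_left h7 hnpos.le
    have h9 : (n : ℝ) * ((lam / n) * (L1T - L1Tc)) = lam * (L1T - L1Tc) := by
      field_simp
    rw [h9] at h8
    linarith [h8]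
  have hcnM := mul_le_mul_of_nonneg_right hlamM (add_nonneg hL1Tnn hL1Tcnn)
  have h10 := mul_le_mul_of_nonneg_left hcone0 hc0.le
  have h11 : lam * ((c - 1) * L1Tc) ≤ lam * ((c + 1) * L1T) := by linarith [h10, hcnM]
  have hcone2 : (c - 1) * L1Tc ≤ (c + 1) * L1T :=
    (mul_le_mul_iff_right₀ hlampos).1 h11
  have hc1 : (0:ℝ) < c - 1 := by linarith
  have hcone : L1Tc ≤ cbar * L1T := by
    rw [hcbar, div_mul_eq_mul_div, le_div_iff₀ hc1]
    linarith [hcone2]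
  -- apply the restricted eigenvalue condition
  have hκ' := hκ δ hδ0 hcone
  have hL1Tle : L1T ≤ Real.sqrt s * pnorm δ / κ := by
    rw [le_div_iff₀ hκpos]
    linarith [hκ']
  have hfin := mul_le_mul_of_nonneg_left hL1Tle hln
  have hTcnn := mul_nonneg hln hL1Tcnn
  linarith [hkey, hfin, hTcnn]
end

section
/- Suppose Q̂(β₀) > 0, κ_c̄ > 0, and λ ≥ c·n·‖S̃‖_∞ with c > 1. Then any square-root lasso solution β̂ with δ̂ = β̂ − β₀ satisfies ‖δ̂‖²_{2,n} ≤ 2√(Q̂(β₀))·‖S̃‖_∞·‖δ̂‖₁ + [√(Q̂(β̂)) + √(Q̂(β₀))]·(λ/n)·(√s·‖δ̂‖_{2,n}/κ_c̄ − ‖δ̂_{Tᶜ}‖₁). (The master inequality (Eq:Id) from the proof of Theorem 1.) -/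
open Finset

set_option maxHeartbeats 2000000 in
/-- The master inequality (Eq:Id) from the proof of Theorem 1:
`‖δ̂‖²_{2,n} ≤ 2√Q̂(β₀)‖S̃‖_∞‖δ̂‖₁ + (√Q̂(β̂)+√Q̂(β₀))(λ/n)(√s‖δ̂‖_{2,n}/κ_c̄ - ‖δ̂_{Tᶜ}‖₁)`. -/
theorem sqrt_lasso_master_inequality
    (n p : ℕ) (hn : 0 < n) (hp : 0 < p)
    (x : Fin n → Fin p → ℝ) (ε : Fin n → ℝ) (β₀ : Fin p → ℝ) (σ : ℝ) (hσ : 0 < σ)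
    (y : Fin n → ℝ) (hy : ∀ i, y i = (∑ j, x i j * β₀ j) + σ * ε i)
    (T : Finset (Fin p)) (hT : ∀ j, j ∈ T ↔ β₀ j ≠ 0)
    (s : ℕ) (hs : s = T.card) (hs1 : 1 ≤ s)
    (Q : (Fin p → ℝ) → ℝ)
    (hQ : ∀ β, Q β = (n : ℝ)⁻¹ * ∑ i, (y i - ∑ j, x i j * β j) ^ 2)
    (hQ0 : 0 < Q β₀)
    (pnorm : (Fin p → ℝ) → ℝ)
    (hpnorm : ∀ δ : Fin p → ℝ,
      pnorm δ = Real.sqrt ((n : ℝ)⁻¹ * ∑ i, (∑ j, x i j * δ j) ^ 2))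
    (S : Fin p → ℝ)
    (hS : ∀ j, S j = ((n : ℝ)⁻¹ * ∑ i, x i j * ε i) /
      Real.sqrt ((n : ℝ)⁻¹ * ∑ i, (ε i) ^ 2))
    (Sinf : ℝ)
    (hSinf : Sinf = Finset.univ.sup' ⟨⟨0, hp⟩, Finset.mem_univ _⟩ (fun j => |S j|))
    (c cbar κ lam : ℝ) (hc : 1 < c) (hcbar : cbar = (c + 1) / (c - 1))
    (hκpos : 0 < κ)
    (hκ : ∀ δ : Fin p → ℝ, δ ≠ 0 → (∑ j ∈ Tᶜ, |δ j|) ≤ cbar * ∑ j ∈ T, |δ j| →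
      κ * (∑ j ∈ T, |δ j|) ≤ Real.sqrt s * pnorm δ)
    (hlam : c * ((n : ℝ) * Sinf) ≤ lam)
    (βh : Fin p → ℝ)
    (hopt : ∀ β : Fin p → ℝ,
      Real.sqrt (Q βh) + (lam / n) * ∑ j, |βh j| ≤
      Real.sqrt (Q β) + (lam / n) * ∑ j, |β j|) :
    (pnorm (fun j => βh j - β₀ j)) ^ 2 ≤
      2 * Real.sqrt (Q β₀) * Sinf * (∑ j, |βh j - β₀ j|) +
        (Real.sqrt (Q βh) + Real.sqrt (Q β₀)) * (lam / n) *
          (Real.sqrt s * pnorm (fun j => βh j - β₀ j) / κ -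
            ∑ j ∈ Tᶜ, |βh j - β₀ j|) := by
  have hnR : (0:ℝ) < (n:ℝ) := by exact_mod_cast hn
  have hninv : (0:ℝ) < (n:ℝ)⁻¹ := inv_pos.mpr hnR
  set δ : Fin p → ℝ := fun j => βh j - β₀ j with hδdef
  set w : Fin n → ℝ := fun i => ∑ j, x i j * δ j with hw
  -- basic quantities
  set e2 : ℝ := (n:ℝ)⁻¹ * ∑ i, ε i ^ 2 with he2
  have hQβ₀ : Q β₀ = σ^2 * e2 := by
    rw [hQ]
    have h1 : ∀ i ∈ Finset.univ, (y i - ∑ j, x i j * β₀ j)^2 = σ^2 * ε i ^2 := by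
      intro i _; rw [hy i]; ring
    rw [Finset.sum_congr rfl h1, ← Finset.mul_sum, he2]; ring
  have hσ2 : 0 < σ^2 := by positivity
  have he2pos : 0 < e2 := by nlinarith [hQ0, hQβ₀]
  have hsqe2 : 0 < Real.sqrt e2 := Real.sqrt_pos.mpr he2pos
  have hsqQ0 : Real.sqrt (Q β₀) = σ * Real.sqrt e2 := by
    rw [hQβ₀, Real.sqrt_mul (sq_nonneg σ), Real.sqrt_sq hσ.le]
  have hsqQ0nn : 0 ≤ Real.sqrt (Q β₀) := Real.sqrt_nonneg _
  have hsqQhnn : 0 ≤ Real.sqrt (Q βh) := Real.sqrt_nonneg _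
  have hSG : ∀ j, Real.sqrt e2 * S j = (n:ℝ)⁻¹ * ∑ i, x i j * ε i := by
    intro j
    rw [hS j, mul_div_assoc']
    exact mul_div_cancel_left₀ _ (ne_of_gt hsqe2)
  -- residual identity
  have hres : ∀ i, y i - ∑ j, x i j * βh j = σ * ε i - w i := by
    intro i
    rw [hy i, hw]
    simp only [hδdef, mul_sub, Finset.sum_sub_distrib]
    ring
  -- cross term
  have hεw : (n:ℝ)⁻¹ * ∑ i, ε i * w i = Real.sqrt e2 * ∑ j, δ j * S j := by
    have h1 : ∑ i, ε i * w i = ∑ j, δ j * ∑ i, x i j * ε i := by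
      simp only [hw, Finset.mul_sum]
      rw [Finset.sum_comm]
      exact Finset.sum_congr rfl fun j _ => Finset.sum_congr rfl fun i _ => by ring
    rw [h1, Finset.mul_sum, Finset.mul_sum]
    apply Finset.sum_congr rfl; intro j _
    linear_combination (-(δ j)) * hSG j
  -- expansion of Q βh
  have hQβh : Q βh = Q β₀ - 2*σ*((n:ℝ)⁻¹ * ∑ i, ε i * w i)
      + (n:ℝ)⁻¹ * ∑ i, (w i)^2 := by
    rw [hQ βh, hQβ₀]
    have h1 : ∀ i ∈ Finset.univ,
        (y i - ∑ j, x i j * βh j)^2 = σ^2 * ε i ^2 - 2*σ*(ε i * w i) + (w i)^2 := by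
      intro i _; rw [hres i]; ring
    rw [Finset.sum_congr rfl h1, Finset.sum_add_distrib, Finset.sum_sub_distrib,
      ← Finset.mul_sum, ← Finset.mul_sum, he2]
    ring
  have hwnn : (0:ℝ) ≤ (n:ℝ)⁻¹ * ∑ i, (w i)^2 := by positivity
  have hpδ : (pnorm δ)^2 = (n:ℝ)⁻¹ * ∑ i, (w i)^2 := by
    rw [hpnorm δ]
    have : ∑ i, (∑ j, x i j * δ j)^2 = ∑ i, (w i)^2 := by
      apply Finset.sum_congr rfl; intro i _; rw [hw]
    rw [this]
    exact Real.sq_sqrt hwnn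
  have hpδnn : 0 ≤ pnorm δ := by rw [hpnorm δ]; exact Real.sqrt_nonneg _
  set a : ℝ := ∑ j, δ j * S j with ha
  have hmaster : (pnorm δ)^2 = Q βh - Q β₀ + 2*σ*Real.sqrt e2 * a := by
    rw [hpδ, hQβh, hεw, ha]; ring
  -- sup-norm bounds
  have hSb : ∀ j, |S j| ≤ Sinf := by
    intro j; rw [hSinf]; exact Finset.le_sup' (fun j => |S j|) (Finset.mem_univ j)
  have hSinf0 : 0 ≤ Sinf := le_trans (abs_nonneg _) (hSb ⟨0, hp⟩)
  have habs : ∀ j : Fin p, 0 ≤ |δ j| := fun j => abs_nonneg _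
  have hl1nn : 0 ≤ ∑ j, |δ j| := Finset.sum_nonneg (fun j _ => abs_nonneg _)
  have habsa : |a| ≤ Sinf * ∑ j, |δ j| := by
    rw [ha]
    calc |∑ j, δ j * S j| ≤ ∑ j, |δ j * S j| := Finset.abs_sum_le_sum_abs _ _
      _ ≤ ∑ j, |δ j| * Sinf := Finset.sum_le_sum fun j _ => by
          rw [abs_mul]; exact mul_le_mul_of_nonneg_left (hSb j) (abs_nonneg _)
      _ = Sinf * ∑ j, |δ j| := by rw [← Finset.sum_mul]; ring
  have hdot : a ≤ Sinf * ∑ j, |δ j| := le_trans (le_abs_self a) habsa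
  have hdot' : -(Sinf * ∑ j, |δ j|) ≤ a := by linarith [neg_abs_le a]
  -- λ ≥ 0
  have hlamnn : 0 ≤ lam := le_trans (by positivity) hlam
  -- T-splitting facts
  set A : ℝ := ∑ j ∈ T, |δ j| with hA
  set B : ℝ := ∑ j ∈ Tᶜ, |δ j| with hB
  have hAnn : 0 ≤ A := Finset.sum_nonneg (fun j _ => abs_nonneg _)
  have hBnn : 0 ≤ B := Finset.sum_nonneg (fun j _ => abs_nonneg _)
  have hABsplit : ∑ j, |δ j| = A + B := by
    rw [hA, hB, Finset.sum_add_sum_compl T (fun j => |δ j|)]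
  have hβ₀c : ∀ j ∈ Tᶜ, β₀ j = 0 := by
    intro j hj
    by_contra h
    exact (Finset.mem_compl.mp hj) ((hT j).mpr h)
  -- optimality bound (step D)
  have hD : Real.sqrt (Q βh) - Real.sqrt (Q β₀) ≤ (lam/n) * (A - B) := by
    have hopt0 := hopt β₀
    have hnorm_split : ∑ j, |β₀ j| - ∑ j, |βh j| ≤ A - B := by
      rw [← Finset.sum_add_sum_compl T (fun j => |β₀ j|),
        ← Finset.sum_add_sum_compl T (fun j => |βh j|)]
      have h1 : ∑ j ∈ Tᶜ, |β₀ j| = 0 :=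
        Finset.sum_eq_zero (fun j hj => by rw [hβ₀c j hj, abs_zero])
      have h2 : ∑ j ∈ Tᶜ, |βh j| = B := by
        rw [hB]
        apply Finset.sum_congr rfl; intro j hj
        simp only [hδdef]
        rw [hβ₀c j hj, sub_zero]
      have h3 : ∑ j ∈ T, |β₀ j| - ∑ j ∈ T, |βh j| ≤ A := by
        rw [hA, ← Finset.sum_sub_distrib]
        apply Finset.sum_le_sum; intro j _
        calc |β₀ j| - |βh j| ≤ |β₀ j - βh j| := abs_sub_abs_le_abs_sub _ _
          _ = |δ j| := by simp only [hδdef]; rw [abs_sub_comm]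
      linarith
    have h := mul_le_mul_of_nonneg_left hnorm_split (div_nonneg hlamnn hnR.le)
    rw [mul_sub] at h
    linarith
  -- lower bound (step E): √Qh ≥ √Q0 - a
  have hQhnn : 0 ≤ Q βh := by rw [hQ]; positivity
  have hE0 : Real.sqrt (Q β₀) - a ≤ Real.sqrt (Q βh) := by
    -- Cauchy-Schwarz: a^2 ≤ (pnorm δ)^2
    have hcs : (∑ i, ε i * w i)^2 ≤ (∑ i, ε i ^2) * ∑ i, (w i)^2 :=
      Finset.sum_mul_sq_le_sq_mul_sq Finset.univ ε w
    have ha2 : a^2 ≤ (pnorm δ)^2 := by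
      have h1 : (Real.sqrt e2 * a)^2 ≤ e2 * (pnorm δ)^2 := by
        rw [← hεw, hpδ, he2]
        calc ((n:ℝ)⁻¹ * ∑ i, ε i * w i)^2
            = (n:ℝ)⁻¹^2 * (∑ i, ε i * w i)^2 := by ring
          _ ≤ (n:ℝ)⁻¹^2 * ((∑ i, ε i ^2) * ∑ i, (w i)^2) := by
              apply mul_le_mul_of_nonneg_left hcs (by positivity)
          _ = ((n:ℝ)⁻¹ * ∑ i, ε i ^ 2) * ((n:ℝ)⁻¹ * ∑ i, (w i)^2) := by ring
      have h2 : (Real.sqrt e2 * a)^2 = e2 * a^2 := by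
        rw [mul_pow, Real.sq_sqrt he2pos.le]
      rw [h2] at h1
      exact le_of_mul_le_mul_left (by linarith) he2pos
    have hQhge : (Real.sqrt (Q β₀) - a)^2 ≤ Q βh := by
      have : Q βh = Q β₀ - 2*σ*Real.sqrt e2*a + (pnorm δ)^2 := by
        rw [hmaster]; ring
      rw [this]
      have hq0 : (Real.sqrt (Q β₀))^2 = Q β₀ := Real.sq_sqrt hQ0.le
      have expand : (Real.sqrt (Q β₀) - a)^2 = Q β₀ - 2*σ*Real.sqrt e2*a + a^2 := by
        linear_combination hq0 + (-2*a)*hsqQ0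
      rw [expand]
      linarith [ha2]
    calc Real.sqrt (Q β₀) - a ≤ |Real.sqrt (Q β₀) - a| := le_abs_self _
      _ = Real.sqrt ((Real.sqrt (Q β₀) - a)^2) := (Real.sqrt_sq_eq_abs _).symm
      _ ≤ Real.sqrt (Q βh) := Real.sqrt_le_sqrt hQhge
  -- step E combined with λ bound
  have hE : -((lam/n) * ∑ j, |δ j|) ≤ c * (Real.sqrt (Q βh) - Real.sqrt (Q β₀)) := by
    have h1 : Real.sqrt (Q βh) - Real.sqrt (Q β₀) ≥ -a := by linarith
    have h2 : c * (Real.sqrt (Q βh) - Real.sqrt (Q β₀)) ≥ c * (-a) :=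
      mul_le_mul_of_nonneg_left h1 (by linarith)
    have h3' : c * Sinf ≤ lam / n := by
      rw [le_div_iff₀ hnR]
      calc c * Sinf * n = c * ((n:ℝ) * Sinf) := by ring
        _ ≤ lam := hlam
    have h3 : c * Sinf * ∑ j, |δ j| ≤ (lam/n) * ∑ j, |δ j| :=
      mul_le_mul_of_nonneg_right h3' hl1nn
    have h4 := mul_le_mul_of_nonneg_left hdot (by linarith : (0:ℝ) ≤ c)
    linarith [h2, h3, h4]
  -- Q difference factorization
  have hQdiff : Q βh - Q β₀ =
      (Real.sqrt (Q βh) + Real.sqrt (Q β₀)) * (Real.sqrt (Q βh) - Real.sqrt (Q β₀)) := by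
    have h1 : (Real.sqrt (Q βh))^2 = Q βh := Real.sq_sqrt hQhnn
    have h2 : (Real.sqrt (Q β₀))^2 = Q β₀ := Real.sq_sqrt hQ0.le
    linear_combination h2 - h1
  -- main case analysis
  show (pnorm δ)^2 ≤ 2 * Real.sqrt (Q β₀) * Sinf * (∑ j, |δ j|)
      + (Real.sqrt (Q βh) + Real.sqrt (Q β₀)) * (lam/n) * (Real.sqrt s * pnorm δ / κ - B)
  by_cases hlampos : 0 < lam
  · by_cases hδ0 : ∀ j, δ j = 0
    · have hA0 : A = 0 := Finset.sum_eq_zero (fun j _ => by rw [hδ0 j, abs_zero])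
      have hB0 : B = 0 := Finset.sum_eq_zero (fun j _ => by rw [hδ0 j, abs_zero])
      have hl10 : ∑ j, |δ j| = 0 := by rw [hABsplit, hA0, hB0]; ring
      have hw0 : ∀ i, w i = 0 := by
        intro i; rw [hw]
        exact Finset.sum_eq_zero (fun j _ => by rw [hδ0 j, mul_zero])
      have hp0 : pnorm δ = 0 := by
        rw [hpnorm δ]
        have hz : ∑ i, (∑ j, x i j * δ j)^2 = 0 := by
          apply Finset.sum_eq_zero; intro i _
          have h0 : ∑ j, x i j * δ j = 0 :=
            Finset.sum_eq_zero (fun j _ => by rw [hδ0 j, mul_zero])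
          rw [h0]; ring
        rw [hz, mul_zero, Real.sqrt_zero]
      rw [hp0, hl10, hB0]
      simp
    · have hne : δ ≠ 0 := by
        intro h
        apply hδ0
        intro j
        exact congrFun h j
      -- cone condition
      have hLpos : 0 < lam / n := div_pos hlampos hnR
      have hcone0 : (c - 1) * B ≤ (c + 1) * A := by
        have h1 : -((lam/n) * (A + B)) ≤ c * ((lam/n) * (A - B)) := by
          have := mul_le_mul_of_nonneg_left hD (by linarith : (0:ℝ) ≤ c)
          rw [hABsplit] at hE
          linarith
        have h5 : (lam/n) * 0 ≤ (lam/n) * ((c+1)*A - (c-1)*B) := by nlinarith [h1]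
        have h6 := (mul_le_mul_iff_right₀ hLpos).mp h5
        linarith [h6]
      have hcone : B ≤ cbar * A := by
        rw [hcbar, div_mul_eq_mul_div, le_div_iff₀ (by linarith : (0:ℝ) < c - 1)]
        linarith [hcone0]
      have hκA : κ * A ≤ Real.sqrt s * pnorm δ := hκ δ hne hcone
      have hAle : A ≤ Real.sqrt s * pnorm δ / κ := by
        rw [le_div_iff₀ hκpos]
        linarith [hκA]
      -- assemble
      have hMnn : 0 ≤ (Real.sqrt (Q βh) + Real.sqrt (Q β₀)) * (lam/n) := by positivity
      have h1 : Q βh - Q β₀ ≤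
          (Real.sqrt (Q βh) + Real.sqrt (Q β₀)) * (lam/n) * (A - B) := by
        rw [hQdiff]
        calc (Real.sqrt (Q βh) + Real.sqrt (Q β₀)) * (Real.sqrt (Q βh) - Real.sqrt (Q β₀))
            ≤ (Real.sqrt (Q βh) + Real.sqrt (Q β₀)) * ((lam/n) * (A - B)) :=
              mul_le_mul_of_nonneg_left hD (by positivity)
          _ = (Real.sqrt (Q βh) + Real.sqrt (Q β₀)) * (lam/n) * (A - B) := by ring
      have h2 : (Real.sqrt (Q βh) + Real.sqrt (Q β₀)) * (lam/n) * (A - B) ≤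
          (Real.sqrt (Q βh) + Real.sqrt (Q β₀)) * (lam/n) * (Real.sqrt s * pnorm δ / κ - B) :=
        mul_le_mul_of_nonneg_left (by linarith) hMnn
      have h3 : 2*σ*Real.sqrt e2 * a ≤ 2 * Real.sqrt (Q β₀) * Sinf * ∑ j, |δ j| := by
        rw [hsqQ0]
        have hnn2 : (0:ℝ) ≤ 2*(σ*Real.sqrt e2) := by positivity
        have h6 := mul_le_mul_of_nonneg_left hdot hnn2
        linarith [h6]
      rw [hmaster]
      linarith
  · -- lam = 0
    have hlam0 : lam = 0 := le_antisymm (not_lt.mp hlampos) hlamnn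
    have hSinf00 : Sinf = 0 := by
      have h1 : c * ((n:ℝ) * Sinf) ≤ 0 := by rw [← hlam0]; exact hlam
      have h2 : Sinf ≤ 0 := by
        by_contra hpos
        push_neg at hpos
        have := mul_pos (lt_trans zero_lt_one hc) (mul_pos hnR hpos)
        linarith
      linarith [hSinf0]
    have hS0 : ∀ j, S j = 0 := by
      intro j
      have := hSb j
      rw [hSinf00] at this
      exact abs_eq_zero.mp (le_antisymm this (abs_nonneg _))
    have ha0 : a = 0 := by
      rw [ha]; exact Finset.sum_eq_zero (fun j _ => by rw [hS0 j, mul_zero])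
    have hQle : Q βh ≤ Q β₀ := by
      have h := hD
      rw [hlam0] at h
      simp only [zero_div, zero_mul] at h
      have h5 : Real.sqrt (Q βh) ≤ Real.sqrt (Q β₀) := by linarith
      have h6 := pow_le_pow_left₀ hsqQhnn h5 2
      rw [Real.sq_sqrt hQhnn, Real.sq_sqrt hQ0.le] at h6
      exact h6
    rw [hmaster, ha0, hlam0, hSinf00]
    simp only [mul_zero, zero_mul, zero_div, add_zero, zero_add]
    linarith
end

section
/- For α ∈ (0,1) and p ≥ 1 with p/α > 8, let t = Φ⁻¹(1 − α/(2p)) and let 0 < r < 1. Then 2p·Φ̄(t(1 − r)) ≤ α·{1 + 1/log(p/α)}·exp{2·log(2p/α)·r}/(1 − r). (Gaussian tail estimate from the proof of Lemma 1(ii).) -/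
open ProbabilityTheory MeasureTheory Real Set

noncomputable def myphi (x : ℝ) : ℝ := (Real.sqrt (2*π))⁻¹ * Real.exp (-(x^2)/2)

lemma myphi_pos (x : ℝ) : 0 < myphi x := by
  unfold myphi
  have : (0:ℝ) < Real.sqrt (2*π) := Real.sqrt_pos.2 (by positivity)
  positivity

lemma phi_eq (x : ℝ) : gaussianPDFReal 0 1 x = myphi x := by
  simp [gaussianPDFReal, myphi]

lemma myphi_integrable : Integrable myphi := by
  have := integrable_gaussianPDFReal 0 1
  simpa [funext phi_eq] using this

lemma myphi_integral_one : ∫ x, myphi x = 1 := by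
  have := integral_gaussianPDFReal_eq_one 0 (one_ne_zero)
  simpa [funext phi_eq] using this

lemma cdf_eq (u : ℝ) : ((gaussianReal 0 1) (Set.Iic u)).toReal = ∫ x in Set.Iic u, myphi x := by
  rw [gaussianReal_apply_eq_integral 0 one_ne_zero]
  rw [ENNReal.toReal_ofReal (integral_nonneg (gaussianPDFReal_nonneg 0 1))]
  simp_rw [phi_eq]

lemma tail_eq (u : ℝ) : 1 - ((gaussianReal 0 1) (Set.Iic u)).toReal = ∫ x in Set.Ioi u, myphi x := by
  rw [cdf_eq]
  have h := intervalIntegral.integral_Iic_add_Ioi (b := u) (μ := volume)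
    myphi_integrable.integrableOn myphi_integrable.integrableOn
  rw [myphi_integral_one] at h
  linarith

lemma sq_div_tendsto : Filter.Tendsto (fun y : ℝ => -(y^2)/2) Filter.atTop Filter.atBot := by
  apply Filter.Tendsto.atBot_div_const (by norm_num : (0:ℝ) < 2)
  apply Filter.tendsto_neg_atBot_iff.2
  exact Filter.tendsto_pow_atTop (by norm_num)

lemma myphi_tendsto_zero : Filter.Tendsto myphi Filter.atTop (nhds 0) := by
  unfold myphi
  rw [show (0:ℝ) = (Real.sqrt (2*π))⁻¹ * 0 by ring]
  exact (Real.tendsto_exp_atBot.comp sq_div_tendsto).const_mul _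

lemma hasDerivAt_sq_div (x : ℝ) : HasDerivAt (fun y : ℝ => -(y^2)/2) (-x) x := by
  have := ((hasDerivAt_pow 2 x).neg).div_const (2:ℝ)
  refine this.congr_deriv ?_
  norm_num
  ring

lemma hasDerivAt_neg_myphi (x : ℝ) : HasDerivAt (fun y => -myphi y) (x * myphi x) x := by
  unfold myphi
  have h2 := ((hasDerivAt_sq_div x).exp).const_mul ((Real.sqrt (2*π))⁻¹)
  have h3 := h2.neg
  refine h3.congr_deriv ?_
  ring

lemma hasDerivAt_myphi (x : ℝ) : HasDerivAt myphi (-(x * myphi x)) x := by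
  have := (hasDerivAt_neg_myphi x).neg
  simpa [Pi.neg_def] using this

lemma integral_x_myphi {s : ℝ} (hs : 0 < s) :
    ∫ x in Set.Ioi s, x * myphi x = myphi s := by
  have h := integral_Ioi_of_hasDerivAt_of_nonneg' (a := s) (g := fun y => -myphi y)
    (g' := fun x => x * myphi x) (l := 0)
    (fun x _ => hasDerivAt_neg_myphi x)
    (fun x hx => by
      have hx0 : (0:ℝ) < x := hs.trans hx
      have := myphi_pos x
      positivity)
    (by simpa using myphi_tendsto_zero.neg)
  simpa using h

lemma integrableOn_x_myphi {s : ℝ} (hs : 0 < s) :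
    IntegrableOn (fun x => x * myphi x) (Set.Ioi s) := by
  apply integrableOn_Ioi_deriv_of_nonneg' (g := fun y => -myphi y) (l := 0)
    (fun x _ => hasDerivAt_neg_myphi x)
    (fun x hx => by
      have hx0 : (0:ℝ) < x := hs.trans hx
      have := myphi_pos x
      positivity)
    (by simpa using myphi_tendsto_zero.neg)

lemma mills_upper {s : ℝ} (hs : 0 < s) :
    ∫ x in Set.Ioi s, myphi x ≤ myphi s / s := by
  have h1 : ∫ x in Set.Ioi s, myphi x ≤ ∫ x in Set.Ioi s, s⁻¹ * (x * myphi x) := by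
    apply setIntegral_mono_on (myphi_integrable.integrableOn)
    · exact (integrableOn_x_myphi hs).const_mul _
    · exact measurableSet_Ioi
    · intro x hx
      have hx1 : 1 ≤ x / s := (one_le_div hs).2 (le_of_lt hx)
      have := myphi_pos x
      have hsx : s ≤ x := le_of_lt hx
      rw [show s⁻¹ * (x * myphi x) = (x/s) * myphi x by field_simp]
      nlinarith
  have h2 : ∫ x in Set.Ioi s, s⁻¹ * (x * myphi x) = myphi s / s := by
    rw [MeasureTheory.integral_const_mul, integral_x_myphi hs, div_eq_inv_mul]
  linarith

lemma hasDerivAt_ratio (x : ℝ) :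
    HasDerivAt (fun y : ℝ => y/(1+y^2)) ((1-x^2)/(1+x^2)^2) x := by
  have hden : (1:ℝ) + x^2 ≠ 0 := by positivity
  have h := (hasDerivAt_id x).div ((hasDerivAt_pow 2 x).const_add 1) hden
  refine h.congr_deriv ?_
  simp only [id]
  field_simp
  ring

lemma hasDerivAt_neg_g (x : ℝ) :
    HasDerivAt (fun y : ℝ => -(y/(1+y^2) * myphi y))
      (myphi x * (x^4+2*x^2-1)/(1+x^2)^2) x := by
  have hden : (1:ℝ) + x^2 ≠ 0 := by positivity
  have h := ((hasDerivAt_ratio x).mul (hasDerivAt_myphi x)).neg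
  refine h.congr_deriv ?_
  field_simp
  ring

lemma g_tendsto_zero :
    Filter.Tendsto (fun y : ℝ => -(y/(1+y^2) * myphi y)) Filter.atTop (nhds 0) := by
  have h : Filter.Tendsto (fun y : ℝ => y/(1+y^2) * myphi y) Filter.atTop (nhds 0) := by
    apply squeeze_zero' ?_ ?_ myphi_tendsto_zero
    · filter_upwards [Filter.eventually_ge_atTop (0:ℝ)] with y hy
      have := myphi_pos y
      positivity
    · filter_upwards [Filter.eventually_ge_atTop (0:ℝ)] with y hy
      have h1 : y/(1+y^2) ≤ 1 := by
        rw [div_le_one (by positivity)]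
        nlinarith
      have := (myphi_pos y).le
      nlinarith [myphi_pos y]
  simpa using h.neg

lemma mills_lower {s : ℝ} (hs : 1 ≤ s) :
    s/(1+s^2) * myphi s ≤ ∫ x in Set.Ioi s, myphi x := by
  have hpos : ∀ x ∈ Set.Ioi s, 0 ≤ myphi x * (x^4+2*x^2-1)/(1+x^2)^2 := by
    intro x hx
    have hx1 : 1 < x := lt_of_le_of_lt hs hx
    have := (myphi_pos x).le
    have h4 : 0 ≤ x^4+2*x^2-1 := by nlinarith
    positivity
  have h := integral_Ioi_of_hasDerivAt_of_nonneg' (a := s)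
    (g := fun y : ℝ => -(y/(1+y^2) * myphi y))
    (g' := fun x => myphi x * (x^4+2*x^2-1)/(1+x^2)^2) (l := 0)
    (fun x _ => hasDerivAt_neg_g x) hpos g_tendsto_zero
  have hint : IntegrableOn (fun x => myphi x * (x^4+2*x^2-1)/(1+x^2)^2) (Set.Ioi s) :=
    integrableOn_Ioi_deriv_of_nonneg' (fun x _ => hasDerivAt_neg_g x) hpos g_tendsto_zero
  have hmono : ∫ x in Set.Ioi s, myphi x * (x^4+2*x^2-1)/(1+x^2)^2 ≤ ∫ x in Set.Ioi s, myphi x := by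
    apply setIntegral_mono_on hint myphi_integrable.integrableOn measurableSet_Ioi
    intro x hx
    have hphi := (myphi_pos x).le
    rw [div_le_iff₀ (by positivity)]
    nlinarith [sq_nonneg (x^2), sq_nonneg x]
  rw [h] at hmono
  simp only [zero_sub, neg_neg] at hmono
  linarith

lemma exp_3log2 : Real.exp (3 * Real.log 2) = 8 := by
  rw [show (3:ℝ) * Real.log 2 = Real.log 8 by
    rw [show (8:ℝ) = 2^3 by norm_num, Real.log_pow]; push_cast; ring]
  exact Real.exp_log (by norm_num)

lemma key_numeric {L : ℝ} (hL : 3 * Real.log 2 ≤ L) :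
    Real.sqrt (2*π) * (1+L) < 2 * Real.sqrt L * Real.exp (L/2) := by
  have hlog2 : 0.6931471803 < Real.log 2 := Real.log_two_gt_d9
  have hpi : π < 3.141593 := Real.pi_lt_d6
  have hL0 : (0:ℝ) < L := by linarith
  set s := L - 3 * Real.log 2 with hs
  have hs0 : 0 ≤ s := by linarith
  have hexpL : Real.exp L = 8 * Real.exp s := by
    rw [show L = 3 * Real.log 2 + s by rw [hs]; ring, Real.exp_add, exp_3log2]
  have hexps : (1 + s/2)^2 ≤ Real.exp s := by
    have h1 : 1 + s/2 ≤ Real.exp (s/2) := by linarith [Real.add_one_le_exp (s/2)]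
    calc (1 + s/2)^2 ≤ (Real.exp (s/2))^2 := by nlinarith [Real.exp_pos (s/2)]
    _ = Real.exp s := by rw [sq, ← Real.exp_add]; norm_num
  have hsq : (Real.sqrt (2*π) * (1+L))^2 < (2 * Real.sqrt L * Real.exp (L/2))^2 := by
    have e1 : (Real.sqrt (2*π))^2 = 2*π := Real.sq_sqrt (by positivity)
    have e2 : (Real.sqrt L)^2 = L := Real.sq_sqrt hL0.le
    have e3 : (Real.exp (L/2))^2 = Real.exp L := by rw [sq, ← Real.exp_add]; norm_num
    calc (Real.sqrt (2*π) * (1+L))^2 = 2*π*(1+L)^2 := by rw [mul_pow, e1]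
    _ < 4 * L * Real.exp L := by
        rw [hexpL]
        have hLs : L = s + 3 * Real.log 2 := by rw [hs]; ring
        have hlog2' : Real.log 2 < 0.6931471808 := Real.log_two_lt_d9
        have hc1 : (2.0794415:ℝ) ≤ 3 * Real.log 2 := by linarith
        have hc2 : (3:ℝ) * Real.log 2 ≤ 2.0794416 := by linarith
        have hpi2 : (3.141592:ℝ) < π := Real.pi_gt_d6
        have hmul := mul_le_mul_of_nonneg_left hexps (by linarith : (0:ℝ) ≤ 32 * L)
        nlinarith [sq_nonneg s, mul_nonneg (mul_nonneg hs0 hs0) hs0,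
          mul_nonneg hs0 hs0, mul_nonneg hs0 (by linarith : (0:ℝ) ≤ 3 * Real.log 2 - 2.0794415),
          mul_nonneg (mul_nonneg hs0 hs0) (by linarith : (0:ℝ) ≤ 3 * Real.log 2 - 2.0794415)]
    _ = (2 * Real.sqrt L * Real.exp (L/2))^2 := by rw [mul_pow, mul_pow, e2, e3]; ring
  have ha : 0 ≤ 2 * Real.sqrt L * Real.exp (L/2) := by positivity
  exact lt_of_pow_lt_pow_left₀ 2 ha hsq

set_option maxHeartbeats 1600000 in
/-- Gaussian tail estimate from the proof of Lemma 1(ii): for `p/α > 8`,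
`t = Φ⁻¹(1 - α/(2p))` and `0 < r < 1`,
`2p Φ̄(t(1-r)) ≤ α {1 + 1/log(p/α)} exp{2 log(2p/α) r}/(1-r)`. -/
theorem gaussian_tail_estimate_ii
    (p : ℕ) (hp : 0 < p)
    (α : ℝ) (hα0 : 0 < α) (hα1 : α < 1)
    (hp8 : 8 < (p : ℝ) / α)
    (Φ : ℝ → ℝ) (hΦ : ∀ u, Φ u = ((gaussianReal 0 1) (Set.Iic u)).toReal)
    (t : ℝ) (ht : Φ t = 1 - α / (2 * p))
    (r : ℝ) (hr0 : 0 < r) (hr1 : r < 1) :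
    2 * p * (1 - Φ (t * (1 - r))) ≤
      α * (1 + 1 / Real.log ((p : ℝ) / α)) *
        Real.exp (2 * Real.log (2 * p / α) * r) / (1 - r) := by
  have hp' : (0:ℝ) < p := Nat.cast_pos.2 hp
  set A := α / (2 * (p:ℝ)) with hA_def
  have hA0 : 0 < A := by positivity
  have hG : ∀ u, 1 - Φ u = ∫ x in Set.Ioi u, myphi x := by
    intro u; rw [hΦ u]; exact tail_eq u
  have hGt : ∫ x in Set.Ioi t, myphi x = A := by
    rw [← hG t, ht]; ring
  set L := Real.log ((p:ℝ) / α) with hL_def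
  have hpα : (0:ℝ) < (p:ℝ)/α := by positivity
  have hL8 : 3 * Real.log 2 ≤ L := by
    have h8 : Real.log 8 < L := Real.log_lt_log (by norm_num) hp8
    have he : Real.log 8 = 3 * Real.log 2 := by
      rw [show (8:ℝ) = 2^3 by norm_num, Real.log_pow]; push_cast; ring
    linarith
  have hlog2 : 0.6931471803 < Real.log 2 := Real.log_two_gt_d9
  have hL1 : 1 < L := by linarith
  have hL0 : 0 < L := by linarith
  have hexpL : Real.exp L = (p:ℝ)/α := Real.exp_log hpα
  have h2pi : (0:ℝ) < Real.sqrt (2*π) := Real.sqrt_pos.2 (by positivity)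
  -- tail at sqrt L exceeds A
  have hsqrtL1 : 1 ≤ Real.sqrt L := by
    rw [show (1:ℝ) = Real.sqrt 1 by simp]
    exact Real.sqrt_le_sqrt hL1.le
  have hsqL : (Real.sqrt L)^2 = L := Real.sq_sqrt hL0.le
  have hphiSqrtL : myphi (Real.sqrt L) = (Real.sqrt (2*π))⁻¹ * Real.exp (-L/2) := by
    unfold myphi; rw [hsqL]
  have hApα : A = 1/2 * Real.exp (-L) := by
    rw [Real.exp_neg, hexpL, inv_div, hA_def]; ring
  have hAL : A < Real.sqrt L/(1+L) * myphi (Real.sqrt L) := by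
    have hkey := key_numeric hL8
    rw [hphiSqrtL, hApα]
    rw [show Real.sqrt L/(1+L) * ((Real.sqrt (2*π))⁻¹ * Real.exp (-L/2))
        = Real.sqrt L * Real.exp (-L/2) / Real.sqrt (2*π) / (1+L) by field_simp]
    rw [lt_div_iff₀ (by positivity : (0:ℝ) < 1+L), lt_div_iff₀ h2pi]
    have e1 : Real.exp (-L) * Real.exp (L/2) = Real.exp (-L/2) := by
      rw [← Real.exp_add]; ring_nf
    have e2 : Real.sqrt L * (Real.exp (-L) * Real.exp (L/2)) = Real.sqrt L * Real.exp (-L/2) := by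
      rw [e1]
    have h' := mul_lt_mul_of_pos_right hkey
      (by positivity : (0:ℝ) < 1/2 * Real.exp (-L))
    nlinarith [h', e2]
  have hGsqrtL : A < ∫ x in Set.Ioi (Real.sqrt L), myphi x := by
    have hml := mills_lower hsqrtL1
    rw [hsqL] at hml
    linarith
  have htL : Real.sqrt L ≤ t := by
    by_contra hcon
    push_neg at hcon
    have hsub : Set.Ioi (Real.sqrt L) ⊆ Set.Ioi t := Set.Ioi_subset_Ioi hcon.le
    have hmono : ∫ x in Set.Ioi (Real.sqrt L), myphi x ≤ ∫ x in Set.Ioi t, myphi x :=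
      setIntegral_mono_set myphi_integrable.integrableOn
        (Filter.Eventually.of_forall (fun x => (myphi_pos x).le))
        (HasSubset.Subset.eventuallyLE hsub)
    rw [hGt] at hmono
    linarith
  have ht1 : 1 ≤ t := le_trans hsqrtL1 htL
  have ht0 : 0 < t := by linarith
  have ht2L : L ≤ t^2 := by
    calc L = (Real.sqrt L)^2 := hsqL.symm
    _ ≤ t^2 := by nlinarith [Real.sqrt_nonneg L]
  -- t^2 ≤ 2M
  set M := Real.log (2*(p:ℝ)/α) with hM_def
  have h2pα : (0:ℝ) < 2*(p:ℝ)/α := by positivity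
  have hexpM : Real.exp M = 2*(p:ℝ)/α := Real.exp_log h2pα
  have hAexpM : A = Real.exp (-M) := by
    rw [Real.exp_neg, hexpM, inv_div, hA_def]
  have hsqrt2pi1 : 1 ≤ Real.sqrt (2*π) := by
    rw [show (1:ℝ) = Real.sqrt 1 by simp]
    exact Real.sqrt_le_sqrt (by nlinarith [Real.pi_gt_three])
  have ht2M : t^2 ≤ 2*M := by
    have h1 : A ≤ myphi t / t := le_trans hGt.symm.le (mills_upper ht0)
    have h2 : myphi t / t ≤ Real.exp (-(t^2)/2) := by
      unfold myphi
      rw [div_le_iff₀ ht0]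
      have hep := (Real.exp_pos (-(t^2)/2)).le
      have h3 : (1:ℝ) ≤ Real.sqrt (2*π) * t := by
        calc (1:ℝ) = 1*1 := by norm_num
        _ ≤ Real.sqrt (2*π) * t := mul_le_mul hsqrt2pi1 ht1 one_pos.le (by positivity)
      calc (Real.sqrt (2*π))⁻¹ * Real.exp (-(t^2)/2)
          ≤ (Real.sqrt (2*π))⁻¹ * (Real.exp (-(t^2)/2) * (Real.sqrt (2*π) * t)) := by
            apply mul_le_mul_of_nonneg_left _ (by positivity)
            exact le_mul_of_one_le_right hep h3
        _ = Real.exp (-(t^2)/2) * t := by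
            field_simp
    have h4 : Real.exp (-M) ≤ Real.exp (-(t^2)/2) := by
      have h14 := h1.trans h2
      rwa [hAexpM] at h14
    have h5 := Real.exp_le_exp.1 h4
    linarith only [h5]
  -- main chain
  set s₀ := t * (1-r) with hs₀_def
  have h1r : (0:ℝ) < 1 - r := by linarith
  have hs₀0 : 0 < s₀ := mul_pos ht0 h1r
  have hGs₀ : 1 - Φ s₀ ≤ myphi s₀ / s₀ := by
    rw [hG s₀]; exact mills_upper hs₀0
  set E := Real.exp (2*M*r) with hE_def
  have hM0 : 0 < M := by
    have hLM : L < M := by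
      apply Real.exp_lt_exp.1
      rw [hexpL, hexpM]
      rw [div_lt_div_iff₀ hα0 hα0]
      nlinarith
    linarith only [hL0, hLM]
  have hE0 : (0:ℝ) < E := Real.exp_pos _
  have hphis₀ : myphi s₀ ≤ myphi t * E := by
    have heq : myphi s₀ = myphi t * Real.exp (t^2*(2*r - r^2)/2) := by
      unfold myphi
      rw [mul_assoc, ← Real.exp_add, hs₀_def]
      ring_nf
    rw [heq]
    apply mul_le_mul_of_nonneg_left _ (myphi_pos t).le
    apply Real.exp_le_exp.2
    nlinarith [mul_le_mul_of_nonneg_right ht2M hr0.le,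
      mul_nonneg (sq_nonneg t) (sq_nonneg r)]
  have hmt : myphi t ≤ A * (1+t^2)/t := by
    have h := mills_lower ht1
    rw [hGt] at h
    rw [le_div_iff₀ ht0]
    have h1t2 : (0:ℝ) < 1+t^2 := by positivity
    have h2 := mul_le_mul_of_nonneg_right h h1t2.le
    have e : t/(1+t^2) * myphi t * (1+t^2) = myphi t * t := by field_simp
    rw [e] at h2
    linarith
  have hfrac : (1+t^2)/t^2 ≤ 1 + 1/L := by
    have h2 : (1:ℝ) ≤ t^2/L := (one_le_div hL0).2 ht2L
    rw [div_le_iff₀ (by positivity : (0:ℝ) < t^2)]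
    have e : (1+1/L)*t^2 = t^2 + t^2/L := by ring
    rw [e]
    linarith only [h2]
  have hchain : 1 - Φ s₀ ≤ A * (1 + 1/L) * E / (1-r) := by
    calc 1 - Φ s₀ ≤ myphi s₀ / s₀ := hGs₀
      _ ≤ (myphi t * E) / s₀ := by gcongr
      _ ≤ (A * (1+t^2)/t * E) / s₀ := by gcongr
      _ = (A * E / (1-r)) * ((1+t^2)/t^2) := by
          rw [hs₀_def]; field_simp
      _ ≤ (A * E / (1-r)) * (1 + 1/L) := by
          gcongr
      _ = A * (1 + 1/L) * E / (1-r) := by ring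
  calc 2 * (p:ℝ) * (1 - Φ s₀) ≤ 2 * (p:ℝ) * (A * (1 + 1/L) * E / (1-r)) := by
        apply mul_le_mul_of_nonneg_left hchain (by positivity)
    _ = α * (1 + 1/L) * E / (1-r) := by
        rw [hA_def]; field_simp
end

section
/- Strong duality for the square-root lasso: if β̂ minimizes β ↦ √(Q̂(β)) + (λ/n)‖β‖₁ over ℝᵖ and Y ≠ Xβ̂, then the vector â = √n·(Y − Xβ̂)/‖Y − Xβ̂‖₂ is dual feasible, i.e., ‖â‖₂ ≤ √n and |Σᵢ x_{ij}âᵢ|/n ≤ λ/n for all j = 1,…,p, and it attains the primal optimal value: (1/n)Σᵢ yᵢâᵢ = ‖Y − Xβ̂‖₂/√n + (λ/n)‖β̂‖₁. (Part of Theorem 2.) -/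
set_option maxHeartbeats 1000000


open Finset

lemma sqrt_lasso_key {C D L b : ℝ} (hD : 0 ≤ D) (hL : 0 < L)
    (H : ∀ t : ℝ, t * C ≤ t ^ 2 * D + L * (|b + t| - |b|)) :
    |C| ≤ L ∧ b * C = L * |b| := by
  have habs : ∀ t : ℝ, |b + t| - |b| ≤ |t| := fun t => by
    have := abs_add_le b t; linarith
  have hCle : C ≤ L := by
    apply le_of_forall_pos_le_add
    intro ε hε
    set t := ε / (D + 1) with htdef
    have ht : (0:ℝ) < t := by positivity
    have hprod : t * (D + 1) = ε := by rw [htdef]; field_simp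
    have h1 := H t
    have h2 := habs t
    rw [abs_of_pos ht] at h2
    have h3 : t * C ≤ t * (t * D + L) := by nlinarith
    have h4 : C ≤ t * D + L := (mul_le_mul_iff_right₀ ht).mp h3
    nlinarith
  have hCge : -L ≤ C := by
    rw [neg_le]
    apply le_of_forall_pos_le_add
    intro ε hε
    set t := ε / (D + 1) with htdef
    have ht : (0:ℝ) < t := by positivity
    have hprod : t * (D + 1) = ε := by rw [htdef]; field_simp
    have h1 := H (-t)
    have h2 := habs (-t)
    rw [abs_neg, abs_of_pos ht] at h2
    have h3 : t * (-C) ≤ t * (t * D + L) := by nlinarith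
    have h4 : -C ≤ t * D + L := (mul_le_mul_iff_right₀ ht).mp h3
    nlinarith
  refine ⟨abs_le.mpr ⟨hCge, hCle⟩, ?_⟩
  rcases lt_trichotomy b 0 with hb | hb | hb
  · -- b < 0 : show C = -L
    have hCeq : C = -L := by
      have : C ≤ -L := by
        apply le_of_forall_pos_le_add
        intro ε hε
        set t := min (-b / 2) (ε / (D + 1)) with htdef
        have ht : (0:ℝ) < t := lt_min (by linarith) (by positivity)
        have ht1 : t ≤ -b / 2 := min_le_left _ _
        have ht2 : t ≤ ε / (D + 1) := min_le_right _ _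
        have h1 := H t
        have hbt : |b + t| = -(b + t) := abs_of_neg (by linarith)
        have hbb : |b| = -b := abs_of_neg hb
        rw [hbt, hbb] at h1
        -- t*C ≤ t²D + L*(-t)
        have h3 : t * C ≤ t * (t * D - L) := by nlinarith
        have h4 : C ≤ t * D - L := (mul_le_mul_iff_right₀ ht).mp h3
        have h5 : t * (D + 1) ≤ ε := by
          have : (ε / (D + 1)) * (D + 1) = ε := by field_simp
          nlinarith
        nlinarith
      linarith
    rw [hCeq, abs_of_neg hb]; ring
  · simp [hb]
  · -- b > 0 : show C = L
    have hCeq : C = L := by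
      have : L ≤ C := by
        apply le_of_forall_pos_le_add
        intro ε hε
        set t := min (b / 2) (ε / (D + 1)) with htdef
        have ht : (0:ℝ) < t := lt_min (by linarith) (by positivity)
        have ht1 : t ≤ b / 2 := min_le_left _ _
        have ht2 : t ≤ ε / (D + 1) := min_le_right _ _
        have h1 := H (-t)
        have hbt : |b + -t| = b + -t := abs_of_pos (by linarith)
        have hbb : |b| = b := abs_of_pos hb
        rw [hbt, hbb] at h1
        -- -t*C ≤ t²D + L*(-t)
        have h3 : t * (L - C) ≤ t * (t * D) := by nlinarith
        have h4 : L - C ≤ t * D := (mul_le_mul_iff_right₀ ht).mp h3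
        have h5 : t * (D + 1) ≤ ε := by
          have : (ε / (D + 1)) * (D + 1) = ε := by field_simp
          nlinarith
        nlinarith
      linarith
    rw [hCeq, abs_of_pos hb]; ring


/-- Strong duality for the square-root lasso (part of Theorem 2): if `β̂`
minimizes the square-root lasso objective and `Y ≠ Xβ̂`, then
`â = √n (Y - Xβ̂)/‖Y - Xβ̂‖₂` is dual feasible and attains
the primal optimal value. -/
theorem sqrt_lasso_strong_duality
    (n p : ℕ) (hn : 0 < n)
    (x : Fin n → Fin p → ℝ) (y : Fin n → ℝ)
    (lam : ℝ) (hlam : 0 < lam)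
    (Q : (Fin p → ℝ) → ℝ)
    (hQ : ∀ β, Q β = (n : ℝ)⁻¹ * ∑ i, (y i - ∑ j, x i j * β j) ^ 2)
    (βh : Fin p → ℝ)
    (hopt : ∀ β : Fin p → ℝ,
      Real.sqrt (Q βh) + (lam / n) * ∑ j, |βh j| ≤
      Real.sqrt (Q β) + (lam / n) * ∑ j, |β j|)
    (hres : ∃ i, y i ≠ ∑ j, x i j * βh j)
    (ahat : Fin n → ℝ)
    (hahat : ∀ i, ahat i = Real.sqrt n * (y i - ∑ j, x i j * βh j) /
      Real.sqrt (∑ i', (y i' - ∑ j, x i' j * βh j) ^ 2)) :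
    Real.sqrt (∑ i, (ahat i) ^ 2) ≤ Real.sqrt n ∧
      (∀ j, |∑ i, x i j * ahat i| / n ≤ lam / n) ∧
      (n : ℝ)⁻¹ * ∑ i, y i * ahat i =
        Real.sqrt (∑ i, (y i - ∑ j, x i j * βh j) ^ 2) / Real.sqrt n +
          (lam / n) * ∑ j, |βh j| := by

  set r : Fin n → ℝ := fun i => y i - ∑ j, x i j * βh j with hr
  set S : ℝ := ∑ i, r i ^ 2 with hSdef
  clear_value S
  clear_value r
  have hnR : (0:ℝ) < n := Nat.cast_pos.mpr hn
  have hS : 0 < S := by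
    rw [hSdef]
    obtain ⟨i0, hi0⟩ := hres
    have h0 : r i0 ≠ 0 := by simp only [hr]; exact sub_ne_zero.mpr hi0
    have h1 : 0 < r i0 ^ 2 := by positivity
    exact Finset.sum_pos' (fun i _ => sq_nonneg _) ⟨i0, Finset.mem_univ _, h1⟩
  have hsS : 0 < Real.sqrt S := Real.sqrt_pos.mpr hS
  have hsn : 0 < Real.sqrt n := Real.sqrt_pos.mpr hnR
  have hsS2 : Real.sqrt S ^ 2 = S := Real.sq_sqrt hS.le
  have hsn2 : Real.sqrt n ^ 2 = (n:ℝ) := Real.sq_sqrt hnR.le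
  have hQβh : Q βh = S / n := by
    rw [hQ, hSdef]; simp only [hr]; ring
  -- the key KKT facts for each coordinate
  have hkey : ∀ j : Fin p,
      |(∑ i, x i j * r i) / (Real.sqrt S * Real.sqrt n)| ≤ lam / n ∧
      βh j * ((∑ i, x i j * r i) / (Real.sqrt S * Real.sqrt n)) =
        (lam / n) * |βh j| := by
    intro j
    apply sqrt_lasso_key (D := (∑ i, (x i j) ^ 2) / (2 * Real.sqrt S * Real.sqrt n))
      (by positivity) (by positivity)
    intro t
    set c : ℝ := ∑ i, x i j * r i with hc
    set d : ℝ := ∑ i, (x i j) ^ 2 with hd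
    set T : ℝ := S - 2 * t * c + t ^ 2 * d with hTdef
    set β : Fin p → ℝ := fun k => if k = j then βh j + t else βh k with hβ
    clear_value c d T β
    have hterm : ∀ i ∈ (Finset.univ : Finset (Fin n)),
        (y i - ∑ k, x i k * β k) ^ 2
          = r i ^ 2 - 2 * t * (x i j * r i) + t ^ 2 * (x i j) ^ 2 := by
      intro i _
      have h2 : ∀ k ∈ (Finset.univ : Finset (Fin p)),
          x i k * β k = x i k * βh k + (if k = j then x i k * t else 0) := by
        intro k _
        by_cases h : k = j <;> simp [hβ, h] <;> ring
      have h1 : ∑ k, x i k * β k = (∑ k, x i k * βh k) + t * x i j := by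
        rw [Finset.sum_congr rfl h2, Finset.sum_add_distrib, Finset.sum_ite_eq' Finset.univ j]
        simp [mul_comm]
      rw [h1]
      simp only [hr]
      ring
    have hQβ : Q β = T / n := by
      rw [hQ, Finset.sum_congr rfl hterm, Finset.sum_add_distrib, Finset.sum_sub_distrib,
        ← Finset.mul_sum, ← Finset.mul_sum, hTdef, hc, hd, hSdef]
      ring
    have hT : 0 ≤ T := by
      have h0 : 0 ≤ Q β := by rw [hQ]; positivity
      rw [hQβ] at h0
      have h1 : T / n * n = T := div_mul_cancel₀ _ hnR.ne'
      nlinarith [mul_nonneg h0 hnR.le]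
    have hβsum : ∑ k, |β k| = (∑ k, |βh k|) + (|βh j + t| - |βh j|) := by
      have h2 : ∀ k ∈ (Finset.univ : Finset (Fin p)),
          |β k| = |βh k| + (if k = j then |βh j + t| - |βh j| else 0) := by
        intro k _
        by_cases h : k = j
        · subst h; simp [hβ]
        · simp [hβ, h]
      rw [Finset.sum_congr rfl h2, Finset.sum_add_distrib, Finset.sum_ite_eq' Finset.univ j]
      simp
    have hstep : Real.sqrt S / Real.sqrt n ≤ Real.sqrt T / Real.sqrt n +
        (lam / n) * (|βh j + t| - |βh j|) := by
      have h0 := hopt β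
      rw [hQβh, hQβ, Real.sqrt_div hS.le, Real.sqrt_div hT, hβsum] at h0
      have hnn : Real.sqrt (n:ℝ) = Real.sqrt n := rfl
      nlinarith [h0]
    -- concavity of sqrt
    have hq : (T - S) / (2 * Real.sqrt S) * (2 * Real.sqrt S) = T - S :=
      div_mul_cancel₀ _ (by positivity)
    have hu : Real.sqrt T ≤ Real.sqrt S + (T - S) / (2 * Real.sqrt S) := by
      have h2 : T ≤ (Real.sqrt S + (T - S) / (2 * Real.sqrt S)) ^ 2 := by
        nlinarith [hq, hsS2, sq_nonneg ((T - S) / (2 * Real.sqrt S))]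
      have h3 : 0 ≤ Real.sqrt S + (T - S) / (2 * Real.sqrt S) := by
        nlinarith [hq, hT, hS, hsS, hsS2]
      calc Real.sqrt T ≤ Real.sqrt ((Real.sqrt S + (T - S) / (2 * Real.sqrt S)) ^ 2) :=
            Real.sqrt_le_sqrt h2
        _ = _ := Real.sqrt_sq h3
    have hu' : Real.sqrt T / Real.sqrt n ≤
        (Real.sqrt S + (T - S) / (2 * Real.sqrt S)) / Real.sqrt n :=
      by gcongr
    have hA : t * (c / (Real.sqrt S * Real.sqrt n)) -
        t ^ 2 * (d / (2 * Real.sqrt S * Real.sqrt n)) =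
        Real.sqrt S / Real.sqrt n -
          (Real.sqrt S + (T - S) / (2 * Real.sqrt S)) / Real.sqrt n := by
      rw [hTdef]
      field_simp
      ring
    linarith [hstep, hu', hA]
  refine ⟨?_, ?_, ?_⟩
  · -- ‖ahat‖ = √n
    have h1 : ∑ i, ahat i ^ 2 = (n:ℝ) := by
      have h2 : ∀ i ∈ (Finset.univ : Finset (Fin n)),
          ahat i ^ 2 = (n:ℝ) / S * r i ^ 2 := by
        intro i _
        rw [hahat i]
        have : y i - ∑ j, x i j * βh j = r i := by simp only [hr]
        rw [this, div_pow, mul_pow, hsn2, hsS2]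
        ring
      rw [Finset.sum_congr rfl h2, ← Finset.mul_sum, ← hSdef]
      exact div_mul_cancel₀ _ hS.ne'
    rw [h1]
  · -- dual feasibility
    intro j
    have h2 := (hkey j).1
    have hsum : ∑ i, x i j * ahat i = Real.sqrt n * (∑ i, x i j * r i) / Real.sqrt S := by
      have h3 : ∀ i ∈ (Finset.univ : Finset (Fin n)),
          x i j * ahat i = Real.sqrt n * (x i j * r i) / Real.sqrt S := by
        intro i _
        rw [hahat i]
        have : y i - ∑ k, x i k * βh k = r i := by simp only [hr]
        rw [this]
        ring
      rw [Finset.sum_congr rfl h3, ← Finset.sum_div, ← Finset.mul_sum]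
    have hpos : (0:ℝ) < Real.sqrt S * Real.sqrt n := mul_pos hsS hsn
    rw [abs_div, abs_mul, abs_of_pos hsS, abs_of_pos hsn, div_le_iff₀ hpos] at h2
    have hfin : |∑ i, x i j * ahat i| ≤ lam := by
      rw [hsum, abs_div, abs_mul, abs_of_pos hsn, abs_of_pos hsS, div_le_iff₀ hsS]
      calc Real.sqrt n * |∑ i, x i j * r i|
          ≤ Real.sqrt n * (lam / n * (Real.sqrt S * Real.sqrt n)) := by gcongr
        _ = lam / n * Real.sqrt n ^ 2 * Real.sqrt S := by ring
        _ = lam * Real.sqrt S := by rw [hsn2, div_mul_cancel₀ _ hnR.ne']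
    gcongr
  · -- strong duality value
    have hsum : ∑ i, y i * ahat i = Real.sqrt n * (∑ i, y i * r i) / Real.sqrt S := by
      have h3 : ∀ i ∈ (Finset.univ : Finset (Fin n)),
          y i * ahat i = Real.sqrt n * (y i * r i) / Real.sqrt S := by
        intro i _
        rw [hahat i]
        have : y i - ∑ k, x i k * βh k = r i := by simp only [hr]
        rw [this]
        ring
      rw [Finset.sum_congr rfl h3, ← Finset.sum_div, ← Finset.mul_sum]
    have hyr : ∑ i, y i * r i = S + ∑ j, βh j * (∑ i, x i j * r i) := by
      have h3 : ∀ i ∈ (Finset.univ : Finset (Fin n)),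
          y i * r i = r i ^ 2 + ∑ j, x i j * βh j * r i := by
        intro i _
        have h4 : y i = r i + ∑ j, x i j * βh j := by simp only [hr]; ring
        rw [h4, add_mul, Finset.sum_mul, sq]
      rw [Finset.sum_congr rfl h3, Finset.sum_add_distrib, ← hSdef, Finset.sum_comm]
      congr 1
      refine Finset.sum_congr rfl fun j _ => ?_
      rw [Finset.mul_sum]
      refine Finset.sum_congr rfl fun i _ => ?_
      ring
    have hbc : ∑ j, βh j * (∑ i, x i j * r i) =
        lam / n * (Real.sqrt S * Real.sqrt n) * ∑ j, |βh j| := by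
      rw [Finset.mul_sum]
      refine Finset.sum_congr rfl fun j _ => ?_
      have h5 := (hkey j).2
      have h6 : βh j * (∑ i, x i j * r i) =
          βh j * ((∑ i, x i j * r i) / (Real.sqrt S * Real.sqrt n)) * (Real.sqrt S * Real.sqrt n) := by
        field_simp
      rw [h6, h5]
      ring
    rw [hsum, hyr, hbc]
    field_simp
    linear_combination ((n:ℝ)*S + Real.sqrt n*lam*Real.sqrt S*(∑ j, |βh j|)) * hsn2 -
      ((n:ℝ)^2) * hsS2
end

section
/- Characterization of the zero solution: suppose (1/n)Σᵢ yᵢ² > 0. Then β = 0 is a minimizer of β ↦ √((1/n)Σᵢ (yᵢ − xᵢ'β)²) + (λ/n)‖β‖₁ if and only if n·max_{1≤j≤p} |(1/n)Σᵢ x_{ij}yᵢ| ≤ λ·√((1/n)Σᵢ yᵢ²). (Subgradient argument from Section 2.1 of the paper.) -/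
open Finset

private lemma cs_sum (n : ℕ) (a b : Fin n → ℝ) :
    ∑ i, a i * b i ≤ Real.sqrt (∑ i, a i ^ 2) * Real.sqrt (∑ i, b i ^ 2) := by
  calc ∑ i, a i * b i ≤ |∑ i, a i * b i| := le_abs_self _
    _ = Real.sqrt ((∑ i, a i * b i) ^ 2) := (Real.sqrt_sq_eq_abs _).symm
    _ ≤ Real.sqrt ((∑ i, a i ^ 2) * ∑ i, b i ^ 2) :=
        Real.sqrt_le_sqrt (Finset.sum_mul_sq_le_sq_mul_sq Finset.univ a b)
    _ = _ := Real.sqrt_mul (Finset.sum_nonneg fun i _ => sq_nonneg _) _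

private lemma sqrt_sub_le_aux {Q h : ℝ} (hQ : 0 < Q) (h0 : 0 ≤ h) (h2 : h ≤ 2 * Q) :
    Real.sqrt (Q - h) ≤ Real.sqrt Q - h / (2 * Real.sqrt Q) := by
  have hs : 0 < Real.sqrt Q := Real.sqrt_pos.mpr hQ
  have hsq : Real.sqrt Q ^ 2 = Q := Real.sq_sqrt hQ.le
  rw [Real.sqrt_le_iff]
  constructor
  · rw [sub_nonneg, div_le_iff₀ (by positivity)]
    nlinarith
  · have hu : h = 2 * Real.sqrt Q * (h / (2 * Real.sqrt Q)) := by field_simp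
    nlinarith [sq_nonneg (h / (2 * Real.sqrt Q))]

set_option maxHeartbeats 1000000 in
/-- Characterization of the zero solution (subgradient argument from Section 2.1):
assuming `(1/n)Σᵢ yᵢ² > 0`, `β = 0` minimizes the square-root lasso objective if
and only if `n max_j |(1/n)Σᵢ x_{ij} yᵢ| ≤ λ √((1/n)Σᵢ yᵢ²)`. -/
theorem sqrt_lasso_zero_solution_iff
    (n p : ℕ) (hn : 0 < n) (hp : 0 < p)
    (x : Fin n → Fin p → ℝ) (y : Fin n → ℝ)
    (lam : ℝ) (hlam : 0 < lam)
    (f : (Fin p → ℝ) → ℝ)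
    (hf : ∀ β, f β = Real.sqrt ((n : ℝ)⁻¹ * ∑ i, (y i - ∑ j, x i j * β j) ^ 2) +
      (lam / n) * ∑ j, |β j|)
    (hy2 : 0 < (n : ℝ)⁻¹ * ∑ i, (y i) ^ 2) :
    (∀ β : Fin p → ℝ, f 0 ≤ f β) ↔
      (n : ℝ) * Finset.univ.sup' ⟨⟨0, hp⟩, Finset.mem_univ _⟩
          (fun j => |(n : ℝ)⁻¹ * ∑ i, x i j * y i|) ≤
        lam * Real.sqrt ((n : ℝ)⁻¹ * ∑ i, (y i) ^ 2) := by
  have hn' : (0:ℝ) < n := by exact_mod_cast hn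
  set Q := (n : ℝ)⁻¹ * ∑ i, (y i) ^ 2 with hQ
  set c : Fin p → ℝ := fun j => (n : ℝ)⁻¹ * ∑ i, x i j * y i with hc
  clear_value Q c
  have hfold : (fun j => |(n : ℝ)⁻¹ * ∑ i, x i j * y i|) = fun j => |c j| := by
    funext j; simp only [hc]
  rw [hfold]
  have hsQ : 0 < Real.sqrt Q := Real.sqrt_pos.mpr hy2
  have hf0 : f 0 = Real.sqrt Q := by
    rw [hf]; simp [hQ]
  constructor
  · -- minimizer ⇒ bound; prove contrapositive
    intro hmin
    by_contra hcon
    push_neg at hcon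
    obtain ⟨j₀, -, hj₀⟩ := Finset.exists_mem_eq_sup'
      (⟨⟨0, hp⟩, Finset.mem_univ _⟩ : Finset.univ.Nonempty) (fun j => |c j|)
    rw [hj₀] at hcon
    -- hcon : lam * √Q < n * |c j₀|
    have h4 : 0 < lam * Real.sqrt Q / n := div_pos (mul_pos hlam hsQ) hn'
    obtain ⟨ε, hεdef⟩ : ∃ ε : ℝ, ε = |c j₀| - lam * Real.sqrt Q / n := ⟨_, rfl⟩
    have hd : lam * Real.sqrt Q / n < |c j₀| := (div_lt_iff₀ hn').2 (by linarith)
    have hε : 0 < ε := by rw [hεdef]; linarith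
    have hc0 : 0 < |c j₀| := lt_trans h4 hd
    obtain ⟨A, hA⟩ : ∃ A : ℝ, A = (n:ℝ)⁻¹ * ∑ i, (x i j₀)^2 := ⟨_, rfl⟩
    have hA0 : 0 ≤ A := by rw [hA]; positivity
    obtain ⟨t, htdef⟩ : ∃ t : ℝ, t = min (ε/(A+1)) (Q/|c j₀|) := ⟨_, rfl⟩
    have ht : 0 < t := htdef ▸ lt_min (div_pos hε (by linarith)) (div_pos hy2 hc0)
    have ht1 : t ≤ ε/(A+1) := htdef ▸ min_le_left _ _
    have ht2 : t ≤ Q/|c j₀| := htdef ▸ min_le_right _ _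
    have hstep : ε/(A+1)*A < 2*ε := by
      rw [div_mul_eq_mul_div, div_lt_iff₀ (by linarith)]
      nlinarith
    have htA : t * A < 2 * ε := lt_of_le_of_lt (mul_le_mul_of_nonneg_right ht1 hA0) hstep
    have htQ : t * |c j₀| ≤ Q := (le_div_iff₀ hc0).1 ht2
    obtain ⟨b, hbdef⟩ : ∃ b : ℝ, b = if 0 ≤ c j₀ then t else -t := ⟨_, rfl⟩
    have hb : |b| = t := by
      rw [hbdef]; split_ifs <;> simp [abs_of_pos ht, ht.le]
    have hbc : b * c j₀ = t * |c j₀| := by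
      rw [hbdef]; split_ifs with h
      · rw [abs_of_nonneg h]
      · rw [abs_of_neg (not_le.1 h)]; ring
    have hb2 : b^2 = t^2 := by rw [← sq_abs, hb]
    obtain ⟨β, hβ⟩ : ∃ β : Fin p → ℝ, β = fun j => if j = j₀ then b else 0 := ⟨_, rfl⟩
    have h1 : ∀ i, ∑ j, x i j * β j = x i j₀ * b := by
      intro i
      rw [hβ]
      simp only [mul_ite, mul_zero]
      rw [Finset.sum_ite_eq' Finset.univ j₀ (fun j => x i j * b)]
      simp
    have h2 : ∑ j, |β j| = t := by
      have habs : ∀ j, |β j| = if j = j₀ then |b| else 0 := by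
        intro j; rw [hβ]; by_cases h : j = j₀ <;> simp [h]
      rw [Finset.sum_congr rfl fun j _ => habs j,
        Finset.sum_ite_eq' Finset.univ j₀ (fun _ => |b|)]
      simp [hb]
    have h3 : (n:ℝ)⁻¹ * ∑ i, (y i - x i j₀ * b)^2
        = Q - (2*(t*|c j₀|) - t^2*A) := by
      have expand : ∀ i ∈ Finset.univ, (y i - x i j₀ * b)^2
          = y i^2 - (2*b)*(x i j₀ * y i) + b^2 * (x i j₀)^2 := fun i _ => by ring
      rw [Finset.sum_congr rfl expand, Finset.sum_add_distrib, Finset.sum_sub_distrib,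
        ← Finset.mul_sum, ← Finset.mul_sum, ← hbc, ← hb2, hQ, hA]
      have : c j₀ = (n : ℝ)⁻¹ * ∑ i, x i j₀ * y i := by simp only [hc]
      rw [this]
      ring
    have hfβ : f β = Real.sqrt (Q - (2*(t*|c j₀|) - t^2*A)) + (lam/n)*t := by
      rw [hf β]
      have h1' : ∑ i, (y i - ∑ j, x i j * β j)^2 = ∑ i, (y i - x i j₀ * b)^2 :=
        Finset.sum_congr rfl fun i _ => by rw [h1 i]
      rw [h1', h3, h2]
    have key1 : t * (t * A) < t * (2 * ε) := mul_lt_mul_of_pos_left htA ht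
    have key2 : t * (2 * ε) ≤ t * (2 * |c j₀|) := by
      apply mul_le_mul_of_nonneg_left _ ht.le
      rw [hεdef]; linarith
    have h0' : 0 ≤ 2*(t*|c j₀|) - t^2*A := by linarith [key1, key2]
    have h2Q : 2*(t*|c j₀|) - t^2*A ≤ 2 * Q := by
      linarith [htQ, mul_nonneg (sq_nonneg t) hA0]
    have hsqrt := sqrt_sub_le_aux hy2 h0' h2Q
    have hlt : (lam/n)*t < (2*(t*|c j₀|) - t^2*A) / (2*Real.sqrt Q) := by
      rw [lt_div_iff₀ (by positivity)]
      have hcval : |c j₀| = ε + lam * Real.sqrt Q / n := by rw [hεdef]; ring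
      rw [hcval]
      have hne : (n:ℝ) ≠ 0 := ne_of_gt hn'
      have expand : 2*(t*(ε + lam * Real.sqrt Q / n)) - t^2*A
          = 2*t*ε + lam/n*t*(2*Real.sqrt Q) - t*(t*A) := by
        field_simp
      rw [expand]
      nlinarith [key1]
    have hflt : f β < f 0 := by
      rw [hfβ, hf0]
      linarith
    exact absurd (hmin β) (not_le.mpr hflt)
  · -- bound ⇒ minimizer
    intro hle β
    rw [hf β, hf0]
    set u : Fin n → ℝ := fun i => ∑ j, x i j * β j with hu
    set R := (n:ℝ)⁻¹ * ∑ i, (y i - u i)^2 with hR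
    clear_value u R
    have hRnn : 0 ≤ R := by rw [hR]; positivity
    have hcb : ∀ j, |c j| ≤ lam * Real.sqrt Q / n := by
      intro j
      have h1 : |c j| ≤ Finset.univ.sup' ⟨⟨0, hp⟩, Finset.mem_univ _⟩ (fun j => |c j|) :=
        Finset.le_sup' (fun j => |c j|) (Finset.mem_univ j)
      rw [le_div_iff₀ hn']
      nlinarith
    -- swap sums
    have hswap : ∑ i, y i * u i = ∑ j, (∑ i, x i j * y i) * β j := by
      simp_rw [hu, Finset.mul_sum, Finset.sum_mul]
      rw [Finset.sum_comm]
      exact Finset.sum_congr rfl fun j _ => Finset.sum_congr rfl fun i _ => by ring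
    -- Cauchy–Schwarz, scaled
    have hcs := cs_sum n y (fun i => y i - u i)
    have hninv : (0:ℝ) ≤ (n:ℝ)⁻¹ := by positivity
    have hms : Real.sqrt (n:ℝ)⁻¹ * Real.sqrt (n:ℝ)⁻¹ = (n:ℝ)⁻¹ := Real.mul_self_sqrt hninv
    have hrw : (n:ℝ)⁻¹ * (Real.sqrt (∑ i, (y i)^2) * Real.sqrt (∑ i, (y i - u i)^2))
        = Real.sqrt Q * Real.sqrt R := by
      rw [hQ, hR, Real.sqrt_mul hninv, Real.sqrt_mul hninv]
      linear_combination (-(Real.sqrt (∑ i, (y i)^2) * Real.sqrt (∑ i, (y i - u i)^2))) * hms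
    have key : Q - ∑ j, c j * β j ≤ Real.sqrt Q * Real.sqrt R := by
      have e1 : ∑ i, y i * (y i - u i) = ∑ i, (y i)^2 - ∑ i, y i * u i := by
        rw [← Finset.sum_sub_distrib]
        exact Finset.sum_congr rfl fun i _ => by ring
      have e2 : Q - ∑ j, c j * β j = (n:ℝ)⁻¹ * ∑ i, y i * (y i - u i) := by
        rw [e1, mul_sub, hQ, hswap, Finset.mul_sum]
        simp only [hc]
        have : ∀ j ∈ Finset.univ, ((n:ℝ)⁻¹ * ∑ i, x i j * y i) * β j
            = (n:ℝ)⁻¹ * ((∑ i, x i j * y i) * β j) := fun j _ => by ring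
        rw [Finset.sum_congr rfl this, Finset.mul_sum]
      rw [e2, ← hrw]
      exact mul_le_mul_of_nonneg_left hcs hninv
    have hsum : ∑ j, c j * β j ≤ (lam * Real.sqrt Q / n) * ∑ j, |β j| := by
      rw [Finset.mul_sum]
      apply Finset.sum_le_sum
      intro j _
      calc c j * β j ≤ |c j * β j| := le_abs_self _
        _ = |c j| * |β j| := abs_mul _ _
        _ ≤ (lam * Real.sqrt Q / n) * |β j| :=
            mul_le_mul_of_nonneg_right (hcb j) (abs_nonneg _)
    have hSnn : 0 ≤ ∑ j, |β j| := Finset.sum_nonneg fun j _ => abs_nonneg _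
    have hmss : Real.sqrt Q * Real.sqrt Q = Q := Real.mul_self_sqrt hy2.le
    have final : Real.sqrt Q * Real.sqrt Q
        ≤ Real.sqrt Q * (Real.sqrt R + (lam/n) * ∑ j, |β j|) := by
      have : (lam * Real.sqrt Q / n) * ∑ j, |β j|
          = Real.sqrt Q * ((lam/n) * ∑ j, |β j|) := by ring
      nlinarith [key, hsum]
    exact le_of_mul_le_mul_left final hsQ
end

section
/- Componentwise optimality (zero case) for the square-root lasso: fix j ∈ {1,…,p}, a weight γⱼ > 0, and a vector β_{−j} ∈ ℝᵖ whose j-th coordinate is zero, and suppose Q̂(β_{−j}) > 0. If |(1/n)Σᵢ x_{ij}(yᵢ − xᵢ'β_{−j})| ≤ (λ/n)·γⱼ·√(Q̂(β_{−j})), then b = 0 minimizes the univariate function b ↦ √(Q̂(β_{−j} + b·eⱼ)) + (λγⱼ/n)·|b|, where eⱼ is the j-th standard basis vector. (Componentwise search rule for the square-root lasso, Supplementary Material.) -/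
open Finset

/-- Componentwise optimality (zero case) for the weighted square-root lasso
(componentwise search rule, Supplementary Material): if
`|(1/n)Σᵢ x_{ij}(yᵢ - xᵢ'β_{-j})| ≤ (λ/n) γⱼ √Q̂(β_{-j})`, then `b = 0` minimizes
`b ↦ √Q̂(β_{-j} + b eⱼ) + (λγⱼ/n)|b|`. -/
theorem sqrt_lasso_componentwise_zero
    (n p : ℕ) (hn : 0 < n)
    (x : Fin n → Fin p → ℝ) (y : Fin n → ℝ)
    (lam : ℝ) (hlam : 0 < lam)
    (Q : (Fin p → ℝ) → ℝ)
    (hQ : ∀ β, Q β = (n : ℝ)⁻¹ * ∑ i, (y i - ∑ j, x i j * β j) ^ 2)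
    (j : Fin p) (γ : ℝ) (hγ : 0 < γ)
    (βmj : Fin p → ℝ) (hβmj : βmj j = 0)
    (hQpos : 0 < Q βmj)
    (hcond : |(n : ℝ)⁻¹ * ∑ i, x i j * (y i - ∑ k, x i k * βmj k)| ≤
      (lam / n) * γ * Real.sqrt (Q βmj)) :
    ∀ b : ℝ,
      Real.sqrt (Q βmj) + (lam * γ / n) * |(0 : ℝ)| ≤
        Real.sqrt (Q (fun k => βmj k + if k = j then b else 0)) +
          (lam * γ / n) * |b| := by
  intro b
  have hnpos : (0:ℝ) < n := by exact_mod_cast hn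
  set r : Fin n → ℝ := fun i => y i - ∑ k, x i k * βmj k with hr
  set S : ℝ := (n : ℝ)⁻¹ * ∑ i, x i j * r i with hS
  set T : ℝ := (n : ℝ)⁻¹ * ∑ i, (x i j)^2 with hT
  set a : ℝ := Q βmj with haQ
  have ha : a = (n : ℝ)⁻¹ * ∑ i, (r i)^2 := by rw [haQ, hQ]
  have hTnn : 0 ≤ T := by
    apply mul_nonneg (by positivity)
    exact Finset.sum_nonneg fun i _ => sq_nonneg _
  -- expand Q at the perturbed point
  have hc : Q (fun k => βmj k + if k = j then b else 0) = a - 2*b*S + b^2*T := by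
    rw [hQ]
    have key : ∀ i, y i - ∑ k, x i k * (βmj k + if k = j then b else 0)
        = r i - b * x i j := by
      intro i
      have h1 : ∑ k, x i k * (βmj k + if k = j then b else 0)
          = (∑ k, x i k * βmj k) + x i j * b := by
        simp [mul_add, Finset.sum_add_distrib, mul_ite, Finset.sum_ite_eq']
      rw [h1, hr]
      ring
    simp_rw [key]
    have expand : ∀ i, (r i - b * x i j)^2
        = (r i)^2 - 2*b*(x i j * r i) + b^2*(x i j)^2 := fun i => by ring
    simp_rw [expand]
    rw [Finset.sum_add_distrib, Finset.sum_sub_distrib, ← Finset.mul_sum, ← Finset.mul_sum]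
    rw [ha, hS, hT]
    ring
  -- Cauchy–Schwarz : S^2 ≤ a * T
  have hcs : S^2 ≤ a * T := by
    have h2 : (∑ i, x i j * r i)^2 ≤ (∑ i, (x i j)^2) * (∑ i, (r i)^2) :=
      Finset.sum_mul_sq_le_sq_mul_sq (Finset.univ : Finset (Fin n))
        (fun i => x i j) (fun i => r i)
    rw [hS, ha, hT]
    calc ((n:ℝ)⁻¹ * ∑ i, x i j * r i)^2
        = (n:ℝ)⁻¹ * (n:ℝ)⁻¹ * (∑ i, x i j * r i)^2 := by ring
      _ ≤ (n:ℝ)⁻¹ * (n:ℝ)⁻¹ * ((∑ i, (x i j)^2) * (∑ i, (r i)^2)) := by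
          apply mul_le_mul_of_nonneg_left h2 (by positivity)
      _ = ((n:ℝ)⁻¹ * ∑ i, (r i)^2) * ((n:ℝ)⁻¹ * ∑ i, (x i j)^2) := by ring
  have hsa : 0 < Real.sqrt a := Real.sqrt_pos.mpr hQpos
  -- key inequality : sqrt a - b*S/sqrt a ≤ sqrt (a - 2bS + b^2 T)
  have hkey : Real.sqrt a - b * S / Real.sqrt a
      ≤ Real.sqrt (a - 2*b*S + b^2*T) := by
    rcases le_or_gt (Real.sqrt a - b * S / Real.sqrt a) 0 with h | h
    · exact h.trans (Real.sqrt_nonneg _)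
    · apply (Real.le_sqrt' h).mpr
      have hsq : (Real.sqrt a)^2 = a := Real.sq_sqrt hQpos.le
      have hne : Real.sqrt a ≠ 0 := ne_of_gt hsa
      have hexp : (Real.sqrt a - b * S / Real.sqrt a)^2
          = a - 2*b*S + b^2 * S^2 / a := by
        field_simp
        rw [hsq]
        ring
      rw [hexp]
      have hdiv : b^2 * S^2 / a ≤ b^2 * T := by
        rw [div_le_iff₀ hQpos]
        nlinarith [sq_nonneg b, hcs]
      linarith
  -- |S| ≤ (lam γ / n) sqrt a
  have hSbound : |S| ≤ (lam * γ / n) * Real.sqrt a := by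
    calc |S| ≤ (lam / n) * γ * Real.sqrt a := hcond
      _ = (lam * γ / n) * Real.sqrt a := by ring
  have hbS : b * S / Real.sqrt a ≤ (lam * γ / n) * |b| := by
    rw [div_le_iff₀ hsa]
    calc b * S ≤ |b * S| := le_abs_self _
      _ = |b| * |S| := abs_mul b S
      _ ≤ |b| * ((lam * γ / n) * Real.sqrt a) := by
          apply mul_le_mul_of_nonneg_left hSbound (abs_nonneg b)
      _ = (lam * γ / n) * |b| * Real.sqrt a := by ring
  rw [hc, abs_zero, mul_zero, add_zero]
  linarith [hkey]
end
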